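/- Monotonicity of product measures: Let X and Y be complete metric spaces, each with a partial order making it L-ordered, and equip X × Y with the ℓ¹ product metric d((x,y),(x',y')) = d(x,x') + d(y,y') and the product order. Let p, p' be Radon Borel probability measures on X and q, q' Radon Borel probability measures on Y, all with finite first moment. If there exist a coupling of p and p' supported on {(x,x') : x ≤ x'} and a coupling of q and q' supported on {(y,y') : y ≤ y'}, then there exists a coupling of the product measures p ⊗ q and p' ⊗ q' supported on {((x,y),(x',y')) : x ≤ x' and y ≤ y'}. -/

import Mathlib

open MeasureTheory

/-- A coupling of two Borel probability measures `p` and `q` on `Z` is a measure on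
`Z × Z` whose marginals (pushforwards along the projections) are `p` and `q`. -/
def IsCoupling {Z : Type*} [MeasurableSpace Z] (r : Measure (Z × Z)) (p q : Measure Z) : Prop :=
  r.map Prod.fst = p ∧ r.map Prod.snd = q

/-- Monotonicity of product measures: on L-ordered complete metric spaces `X` and `Y`
(with `X × Y` carrying the product order), if `p ≤ p'` and `q ≤ q'` in the stochastic
order, then `p ⊗ q ≤ p' ⊗ q'` in the stochastic order on `X × Y`. -/
theorem prod_measure_stochastic_order_monotone
    {X Y : Type*}
    [MetricSpace X] [PartialOrder X] [CompleteSpace X] [MeasurableSpace X] [BorelSpace X]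
    [MetricSpace Y] [PartialOrder Y] [CompleteSpace Y] [MeasurableSpace Y] [BorelSpace Y]
    (hLX : ∀ x y : X, x ≤ y ↔ ∀ f : X → ℝ, Monotone f → LipschitzWith 1 f → f x ≤ f y)
    (hLY : ∀ x y : Y, x ≤ y ↔ ∀ f : Y → ℝ, Monotone f → LipschitzWith 1 f → f x ≤ f y)
    (p p' : Measure X) (q q' : Measure Y)
    [IsProbabilityMeasure p] [IsProbabilityMeasure p']
    [IsProbabilityMeasure q] [IsProbabilityMeasure q']
    (hpR : p.InnerRegular) (hp'R : p'.InnerRegular)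
    (hqR : q.InnerRegular) (hq'R : q'.InnerRegular)
    (hpM : ∀ x₀ : X, Integrable (fun x => dist x x₀) p)
    (hp'M : ∀ x₀ : X, Integrable (fun x => dist x x₀) p')
    (hqM : ∀ y₀ : Y, Integrable (fun y => dist y y₀) q)
    (hq'M : ∀ y₀ : Y, Integrable (fun y => dist y y₀) q')
    (hcoupX : ∃ r : Measure (X × X), IsCoupling r p p' ∧ r {z : X × X | z.1 ≤ z.2}ᶜ = 0)
    (hcoupY : ∃ r : Measure (Y × Y), IsCoupling r q q' ∧ r {z : Y × Y | z.1 ≤ z.2}ᶜ = 0) :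
    ∃ r : Measure ((X × Y) × (X × Y)), IsCoupling r (p.prod q) (p'.prod q') ∧
      r {z : (X × Y) × (X × Y) | z.1.1 ≤ z.2.1 ∧ z.1.2 ≤ z.2.2}ᶜ = 0 := by
  obtain ⟨rX, ⟨hX1, hX2⟩, hXnull⟩ := hcoupX
  obtain ⟨rY, ⟨hY1, hY2⟩, hYnull⟩ := hcoupY
  haveI : IsProbabilityMeasure rX := by
    constructor
    have : rX.map Prod.fst Set.univ = 1 := by rw [hX1, measure_univ]
    rwa [Measure.map_apply measurable_fst MeasurableSet.univ, Set.preimage_univ] at this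
  haveI : IsProbabilityMeasure rY := by
    constructor
    have : rY.map Prod.fst Set.univ = 1 := by rw [hY1, measure_univ]
    rwa [Measure.map_apply measurable_fst MeasurableSet.univ, Set.preimage_univ] at this
  set g : (X × X) × (Y × Y) → (X × Y) × (X × Y) :=
    fun z => ((z.1.1, z.2.1), (z.1.2, z.2.2)) with hg
  have hgm : Measurable g := by
    apply Measurable.prod <;> apply Measurable.prod <;> fun_prop
  refine ⟨(rX.prod rY).map g, ⟨?_, ?_⟩, ?_⟩
  · rw [Measure.map_map measurable_fst hgm]
    have : (Prod.fst ∘ g) = Prod.map (Prod.fst : X × X → X) (Prod.fst : Y × Y → Y) := rfl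
    rw [this, ← Measure.map_prod_map _ _ measurable_fst measurable_fst, hX1, hY1]
  · rw [Measure.map_map measurable_snd hgm]
    have : (Prod.snd ∘ g) = Prod.map (Prod.snd : X × X → X) (Prod.snd : Y × Y → Y) := rfl
    rw [this, ← Measure.map_prod_map _ _ measurable_snd measurable_snd, hX2, hY2]
  · -- choose measurable null supersets
    obtain ⟨MX, hMXsub, hMXmeas, hMXnull⟩ := exists_measurable_superset_of_null hXnull
    obtain ⟨MY, hMYsub, hMYmeas, hMYnull⟩ := exists_measurable_superset_of_null hYnull
    set B : Set ((X × Y) × (X × Y)) :=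
      {w | (w.1.1, w.2.1) ∈ MX} ∪ {w | (w.1.2, w.2.2) ∈ MY} with hB
    have hBmeas : MeasurableSet B := by
      apply MeasurableSet.union
      · exact (hMXmeas.preimage (by fun_prop : Measurable fun w : (X × Y) × (X × Y) => (w.1.1, w.2.1)))
      · exact (hMYmeas.preimage (by fun_prop : Measurable fun w : (X × Y) × (X × Y) => (w.1.2, w.2.2)))
    have hsub : {z : (X × Y) × (X × Y) | z.1.1 ≤ z.2.1 ∧ z.1.2 ≤ z.2.2}ᶜ ⊆ B := by
      intro w hw
      simp only [Set.mem_compl_iff, Set.mem_setOf_eq, not_and_or] at hw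
      rcases hw with h | h
      · exact Or.inl (hMXsub h)
      · exact Or.inr (hMYsub h)
    refine le_antisymm ?_ zero_le
    calc ((rX.prod rY).map g) {z : (X × Y) × (X × Y) | z.1.1 ≤ z.2.1 ∧ z.1.2 ≤ z.2.2}ᶜ
        ≤ ((rX.prod rY).map g) B := measure_mono hsub
      _ = (rX.prod rY) (g ⁻¹' B) := Measure.map_apply hgm hBmeas
      _ ≤ (rX.prod rY) (MX ×ˢ Set.univ) + (rX.prod rY) (Set.univ ×ˢ MY) := by
          have hpre : g ⁻¹' B = (MX ×ˢ Set.univ) ∪ (Set.univ ×ˢ MY) := by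
            ext z
            simp [hB, hg, Set.mem_prod, Set.prod]
          rw [hpre]
          exact measure_union_le _ _
      _ = 0 := by
          rw [Measure.prod_prod, Measure.prod_prod, hMXnull, hMYnull]
          simp
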